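/- Let (λ_k) be nondecreasing positive reals with k^{1/n} λ_k^{-1/2} → γ^{-1} as k → ∞ (γ > 0), set h_k = λ_k^{-1/2}. Then for every α ∈ (0, min{1,γ}/2) there exists β > 0 independent of α such that for all sufficiently large N: (i) if k ≥ (1+αβ)N and |N^{-1/n}ξ| ≤ γ+α then |h_k ξ| ≤ 1−α; (ii) if αβN ≤ k ≤ (1−αβ)N and |N^{-1/n}ξ| ≥ γ−α then |h_k ξ| ≥ 1+α. -/

import Mathlib

open Real Filter

/-- Upper bound `(1+x)^n ≤ 1 + x (3^n - 1)/2` for `0 ≤ x ≤ 2`. -/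
lemma pow_one_add_le_aux (n : ℕ) {x : ℝ} (hx : 0 ≤ x) (hx2 : x ≤ 2) :
    (1 + x) ^ n ≤ 1 + x * ((3:ℝ) ^ n - 1) / 2 := by
  induction n with
  | zero => simp
  | succ m ih =>
    have h3 : (1:ℝ) ≤ 3 ^ m := one_le_pow₀ (by norm_num)
    have hc : (0:ℝ) ≤ (3:ℝ) ^ m - 1 := by linarith
    calc (1 + x) ^ (m + 1) = (1 + x) ^ m * (1 + x) := pow_succ _ _
      _ ≤ (1 + x * ((3:ℝ) ^ m - 1) / 2) * (1 + x) :=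
          mul_le_mul_of_nonneg_right ih (by linarith)
      _ ≤ 1 + x * ((3:ℝ) ^ (m + 1) - 1) / 2 := by
          rw [pow_succ]
          nlinarith [mul_nonneg (mul_nonneg hc hx) (show (0:ℝ) ≤ 2 - x by linarith)]

set_option maxHeartbeats 1600000 in
/-- Phase-space separation: under Weyl's law `k^{1/n} λ_k^{-1/2} → γ⁻¹`, there is `β > 0`
(independent of `α`) such that for all `0 < α < min{1,γ}/2` and all large `N`:
(i) `k ≥ (1+αβ)N` and `|N^{-1/n}ξ| ≤ γ+α` imply `h_k|ξ| ≤ 1−α`;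
(ii) `αβN ≤ k ≤ (1−αβ)N` and `|N^{-1/n}ξ| ≥ γ−α` imply `h_k|ξ| ≥ 1+α`. -/
theorem phase_space_separation (n : ℕ) (hn : 1 ≤ n) (γ : ℝ) (hγ : 0 < γ)
    (lam : ℕ → ℝ) (hmono : Monotone lam) (hpos : ∀ k, 0 < lam k)
    (hweyl : Tendsto (fun k : ℕ => (k : ℝ) ^ ((1 : ℝ) / n) * lam k ^ (-(1 : ℝ) / 2))
      atTop (nhds γ⁻¹)) :
    ∃ β : ℝ, 0 < β ∧
      ∀ α : ℝ, 0 < α → α < min 1 γ / 2 →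
        ∀ᶠ N : ℕ in atTop,
          ∀ (k : ℕ) (ξ : EuclideanSpace ℝ (Fin n)),
            (((1 + α * β) * N ≤ (k : ℝ)) →
              (N : ℝ) ^ (-(1 : ℝ) / n) * ‖ξ‖ ≤ γ + α →
              lam k ^ (-(1 : ℝ) / 2) * ‖ξ‖ ≤ 1 - α) ∧
            ((α * β * N ≤ (k : ℝ) ∧ (k : ℝ) ≤ (1 - α * β) * N) →
              γ - α ≤ (N : ℝ) ^ (-(1 : ℝ) / n) * ‖ξ‖ →
              1 + α ≤ lam k ^ (-(1 : ℝ) / 2) * ‖ξ‖) := by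
  have hn0 : (0:ℝ) < (n:ℝ) := by exact_mod_cast Nat.lt_of_lt_of_le Nat.zero_lt_one hn
  have hu : 0 < γ⁻¹ := inv_pos.mpr hγ
  have hγu : γ * γ⁻¹ = 1 := mul_inv_cancel₀ hγ.ne'
  set p : ℝ := (1:ℝ) / (n:ℝ) with hp_def
  have hp : 0 < p := by positivity
  have hnp : (n:ℝ) * p = 1 := by rw [hp_def]; field_simp
  set β : ℝ := ((n:ℝ) + 3 ^ n) * (1 + γ⁻¹) with hβ_def
  have hβ : 0 < β := by rw [hβ_def]; positivity
  refine ⟨β, hβ, ?_⟩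
  intro α hα0 hα2
  have hα1 : α < 1 / 2 := by
    have := min_le_left (1:ℝ) γ; linarith
  have hαγ : α < γ / 2 := by
    have := min_le_right (1:ℝ) γ; linarith
  have hαu : α * γ⁻¹ < 1 / 2 := by
    have h : α / γ < 1 / 2 := (div_lt_iff₀ hγ).mpr (by linarith)
    rwa [div_eq_mul_inv] at h
  have h1u : (0:ℝ) < 1 + γ⁻¹ := by linarith
  have hγα : (0:ℝ) < γ + α := by linarith
  have hγα' : (0:ℝ) < γ - α := by linarith
  set D : ℝ := 1 + α * β with hD_def
  set E : ℝ := 1 - α * β with hE_def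
  have hD : 0 < D := by rw [hD_def]; nlinarith
  -- key1 : ((1+α γ⁻¹)/(1-α))^n < D
  have key1 : ((1 + α * γ⁻¹) / (1 - α)) ^ n < D := by
    have h1α : (0:ℝ) < 1 - α := by linarith
    have s1 : (1 + α * γ⁻¹) / (1 - α) ≤ 1 + (2 + 2 * γ⁻¹) * α := by
      rw [div_le_iff₀ h1α]
      nlinarith [mul_nonneg (mul_nonneg hα0.le (by linarith : (0:ℝ) ≤ 1 + γ⁻¹))
        (by linarith : (0:ℝ) ≤ 1 - 2 * α)]
    have s0 : (0:ℝ) ≤ (1 + α * γ⁻¹) / (1 - α) :=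
      div_nonneg (by nlinarith) h1α.le
    have s2 : (1 + (2 + 2 * γ⁻¹) * α) ^ n ≤ 1 + (2 + 2 * γ⁻¹) * α * ((3:ℝ) ^ n - 1) / 2 :=
      pow_one_add_le_aux n (by positivity) (by nlinarith)
    have s3 : 1 + (2 + 2 * γ⁻¹) * α * ((3:ℝ) ^ n - 1) / 2 < D := by
      rw [hD_def, hβ_def]
      nlinarith [mul_pos (mul_pos hα0 h1u) (show (0:ℝ) < (n:ℝ) + 1 by linarith),
        pow_pos (show (0:ℝ) < 3 by norm_num) n]
    calc ((1 + α * γ⁻¹) / (1 - α)) ^ n ≤ (1 + (2 + 2 * γ⁻¹) * α) ^ n :=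
          pow_le_pow_left₀ s0 s1 n
      _ ≤ 1 + (2 + 2 * γ⁻¹) * α * ((3:ℝ) ^ n - 1) / 2 := s2
      _ < D := s3
  -- key2 : E < ((1-α γ⁻¹)/(1+α))^n
  have key2 : E < ((1 - α * γ⁻¹) / (1 + α)) ^ n := by
    have h1α : (0:ℝ) < 1 + α := by linarith
    have haa : (0:ℝ) ≤ 1 - α * (1 + γ⁻¹) := by nlinarith
    have b1 : E < 1 - (n:ℝ) * (α * (1 + γ⁻¹)) := by
      rw [hE_def, hβ_def]
      nlinarith [mul_pos (mul_pos hα0 (pow_pos (show (0:ℝ) < 3 by norm_num) n)) h1u]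
    have b2 : 1 - (n:ℝ) * (α * (1 + γ⁻¹)) ≤ (1 - α * (1 + γ⁻¹)) ^ n := by
      have h := one_add_mul_le_pow (a := -(α * (1 + γ⁻¹))) (by nlinarith) n
      have e1 : 1 + (n:ℝ) * (-(α * (1 + γ⁻¹))) = 1 - (n:ℝ) * (α * (1 + γ⁻¹)) := by ring
      have e2 : 1 + (-(α * (1 + γ⁻¹))) = 1 - α * (1 + γ⁻¹) := by ring
      rw [e1, e2] at h
      exact h
    have b3 : (1 - α * (1 + γ⁻¹)) ^ n ≤ ((1 - α * γ⁻¹) * (1 - α)) ^ n :=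
      pow_le_pow_left₀ haa (by nlinarith [mul_nonneg (mul_nonneg hα0.le hα0.le) hu.le]) n
    have b4 : ((1 - α * γ⁻¹) * (1 - α)) ^ n ≤ ((1 - α * γ⁻¹) / (1 + α)) ^ n := by
      apply pow_le_pow_left₀ (mul_nonneg (by linarith) (by linarith))
      rw [le_div_iff₀ h1α]
      nlinarith [mul_nonneg (show (0:ℝ) ≤ 1 - α * γ⁻¹ by linarith) (sq_nonneg α)]
    linarith
  -- transfer to rpow exponent p
  have hDrp : (1 + α * γ⁻¹) / (1 - α) < D ^ p := by
    have h0 : (0:ℝ) ≤ (1 + α * γ⁻¹) / (1 - α) :=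
      div_nonneg (by nlinarith) (by linarith)
    have h2 := Real.rpow_lt_rpow (pow_nonneg h0 n) key1 hp
    rwa [← Real.rpow_natCast ((1 + α * γ⁻¹) / (1 - α)) n, ← Real.rpow_mul h0,
      hnp, Real.rpow_one] at h2
  have hErp : 0 < E → E ^ p < (1 - α * γ⁻¹) / (1 + α) := by
    intro hE
    have h0 : (0:ℝ) ≤ (1 - α * γ⁻¹) / (1 + α) :=
      div_nonneg (by linarith) (by linarith)
    have h2 := Real.rpow_lt_rpow hE.le key2 hp
    rwa [← Real.rpow_natCast ((1 - α * γ⁻¹) / (1 + α)) n, ← Real.rpow_mul h0,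
      hnp, Real.rpow_one] at h2
  have hDp0 : (0:ℝ) < D ^ p := Real.rpow_pos_of_pos hD p
  set c₁ : ℝ := (1 - α) * D ^ p / (γ + α) with hc1_def
  set c₂ : ℝ := (1 + α) * E ^ p / (γ - α) with hc2_def
  have hc₁ : γ⁻¹ < c₁ := by
    rw [hc1_def, lt_div_iff₀ hγα]
    have h1α : (0:ℝ) < 1 - α := by linarith
    have e1 : γ⁻¹ * (γ + α) = (1 - α) * ((1 + α * γ⁻¹) / (1 - α)) := by
      field_simp [hγ.ne', h1α.ne']
    rw [e1]
    exact mul_lt_mul_of_pos_left hDrp (by linarith)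
  have hc₂ : 0 < E → c₂ < γ⁻¹ := by
    intro hE
    rw [hc2_def, div_lt_iff₀ hγα']
    have h1α : (0:ℝ) < 1 + α := by linarith
    have e1 : γ⁻¹ * (γ - α) = (1 + α) * ((1 - α * γ⁻¹) / (1 + α)) := by
      field_simp [hγ.ne', h1α.ne']
    rw [e1]
    exact mul_lt_mul_of_pos_left (hErp hE) (by linarith)
  -- eventual bounds in k
  have hf1 : ∀ᶠ k : ℕ in atTop,
      (k : ℝ) ^ ((1 : ℝ) / n) * lam k ^ (-(1 : ℝ) / 2) < c₁ :=
    hweyl.eventually_lt_const hc₁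
  have hf2 : ∀ᶠ k : ℕ in atTop,
      (0 < E → c₂ < (k : ℝ) ^ ((1 : ℝ) / n) * lam k ^ (-(1 : ℝ) / 2)) := by
    rcases le_or_gt E 0 with hE | hE
    · exact Eventually.of_forall (fun k h' => absurd h' (not_lt.mpr hE))
    · exact (hweyl.eventually_const_lt (hc₂ hE)).mono (fun k h _ => h)
  obtain ⟨K, hK⟩ := eventually_atTop.mp (hf1.and hf2)
  -- eventual N
  have tN : Tendsto (fun N : ℕ => α * β * (N:ℝ)) atTop atTop :=
    tendsto_natCast_atTop_atTop.const_mul_atTop (by positivity)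
  filter_upwards [tN.eventually_ge_atTop (K:ℝ), eventually_ge_atTop 1] with N hKN hN1
  intro k ξ
  have hN0 : (0:ℝ) < N := by exact_mod_cast Nat.lt_of_lt_of_le Nat.zero_lt_one hN1
  have hNp : 0 < (N:ℝ) ^ p := Real.rpow_pos_of_pos hN0 p
  have hh : 0 < lam k ^ (-(1:ℝ) / 2) := Real.rpow_pos_of_pos (hpos k) _
  have hrw : (N : ℝ) ^ (-(1:ℝ) / (n:ℝ)) = ((N:ℝ) ^ p)⁻¹ := by
    rw [neg_div, Real.rpow_neg hN0.le, hp_def]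
  constructor
  · -- part (i)
    intro hk hξ
    have hk0 : (0:ℝ) < k := lt_of_lt_of_le (by positivity) hk
    have hkK : K ≤ k := by
      have h1 : (K:ℝ) ≤ (k:ℝ) := by nlinarith
      exact_mod_cast h1
    have hfk := (hK k hkK).1
    have hξ' : ‖ξ‖ ≤ (γ + α) * (N:ℝ) ^ p := by
      rw [hrw, inv_mul_le_iff₀ hNp] at hξ
      exact hξ.trans_eq (mul_comm _ _)
    have hkp : (N:ℝ) ^ p ≤ (k:ℝ) ^ p / D ^ p := by
      have h1 : (N:ℝ) ≤ (k:ℝ) / D := (le_div_iff₀ hD).mpr (by nlinarith)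
      calc (N:ℝ) ^ p ≤ ((k:ℝ) / D) ^ p := Real.rpow_le_rpow hN0.le h1 hp.le
        _ = (k:ℝ) ^ p / D ^ p := Real.div_rpow (Nat.cast_nonneg k) hD.le p
    calc lam k ^ (-(1:ℝ) / 2) * ‖ξ‖
        ≤ lam k ^ (-(1:ℝ) / 2) * ((γ + α) * (N:ℝ) ^ p) :=
          mul_le_mul_of_nonneg_left hξ' hh.le
      _ ≤ lam k ^ (-(1:ℝ) / 2) * ((γ + α) * ((k:ℝ) ^ p / D ^ p)) := by
          apply mul_le_mul_of_nonneg_left _ hh.le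
          exact mul_le_mul_of_nonneg_left hkp hγα.le
      _ = ((k:ℝ) ^ p * lam k ^ (-(1:ℝ) / 2)) * ((γ + α) / D ^ p) := by
          ring
      _ ≤ c₁ * ((γ + α) / D ^ p) :=
          mul_le_mul_of_nonneg_right hfk.le (by positivity)
      _ = 1 - α := by
          rw [hc1_def]
          field_simp
  · -- part (ii)
    rintro ⟨hk1, hk2⟩ hξ
    have hαβN : 0 < α * β * (N:ℝ) := by positivity
    have hk0 : (0:ℝ) < k := lt_of_lt_of_le hαβN hk1
    have hE : 0 < E := by
      by_contra h
      push_neg at h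
      have hEN : E * (N:ℝ) ≤ 0 := mul_nonpos_of_nonpos_of_nonneg h hN0.le
      linarith
    have hkK : K ≤ k := by
      have h1 : (K:ℝ) ≤ (k:ℝ) := le_trans hKN hk1
      exact_mod_cast h1
    have hfk := (hK k hkK).2 hE
    have hEp0 : (0:ℝ) < E ^ p := Real.rpow_pos_of_pos hE p
    have hξ' : (γ - α) * (N:ℝ) ^ p ≤ ‖ξ‖ := by
      rw [hrw] at hξ
      have h := mul_le_mul_of_nonneg_left hξ hNp.le
      rw [← mul_assoc, mul_inv_cancel₀ hNp.ne', one_mul] at h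
      calc (γ - α) * (N:ℝ) ^ p = (N:ℝ) ^ p * (γ - α) := mul_comm _ _
        _ ≤ ‖ξ‖ := h
    have hkp : (k:ℝ) ^ p / E ^ p ≤ (N:ℝ) ^ p := by
      rw [div_le_iff₀ hEp0]
      have h2 : (k:ℝ) ^ p ≤ (E * (N:ℝ)) ^ p := by
        exact Real.rpow_le_rpow (Nat.cast_nonneg k) hk2 hp.le
      calc (k:ℝ) ^ p ≤ (E * (N:ℝ)) ^ p := h2
        _ = E ^ p * (N:ℝ) ^ p := Real.mul_rpow hE.le hN0.le
        _ = (N:ℝ) ^ p * E ^ p := mul_comm _ _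
    calc 1 + α = c₂ * ((γ - α) / E ^ p) := by
          rw [hc2_def]; field_simp
      _ ≤ ((k:ℝ) ^ p * lam k ^ (-(1:ℝ) / 2)) * ((γ - α) / E ^ p) :=
          mul_le_mul_of_nonneg_right hfk.le (by positivity)
      _ = lam k ^ (-(1:ℝ) / 2) * ((γ - α) * ((k:ℝ) ^ p / E ^ p)) := by
          ring
      _ ≤ lam k ^ (-(1:ℝ) / 2) * ((γ - α) * (N:ℝ) ^ p) := by
          apply mul_le_mul_of_nonneg_left _ hh.le
          exact mul_le_mul_of_nonneg_left hkp hγα'.le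
      _ ≤ lam k ^ (-(1:ℝ) / 2) * ‖ξ‖ :=
          mul_le_mul_of_nonneg_left hξ' hh.le
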